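/- There exists no admissible tableau on a rectangular Young diagram with r+2 rows and s+2 columns with entries from the totally ordered set J = J₊ ∪ J₋ where |J₊| = r+1 and |J₋| = s+1, under the admissibility conditions: entries weakly increase along rows and columns, entries from J₊ strictly increase down columns, and entries from J₋ strictly increase along rows. -/

import Mathlib

lemma strict_line {α : Type*} [LinearOrder α] (s : ℕ) (Jm : Finset α) (hcm : Jm.card = s + 1)
    (g : Fin (s + 2) → α) (hmem : ∀ j, g j ∈ Jm)
    (hstep : ∀ j : Fin (s + 1), g j.castSucc < g j.succ) : False := by
  have hsm : StrictMono g := Fin.strictMono_iff_lt_succ.mpr hstep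
  have h := Finset.card_le_card_of_injOn (s := Finset.univ) (t := Jm) g
    (fun a _ => hmem a) hsm.injective.injOn
  simp only [Finset.card_univ, Fintype.card_fin, hcm] at h
  omega

lemma aux_tab {α : Type*} [LinearOrder α] :
    ∀ (n r s : ℕ), r + s = n →
    ∀ (Jp Jm : Finset α), Disjoint Jp Jm → Jp.card = r + 1 → Jm.card = s + 1 →
    ∀ b : Fin (r + 2) → Fin (s + 2) → α,
      (∀ i j, b i j ∈ Jp ∨ b i j ∈ Jm) →
      (∀ i, Monotone (b i)) →
      (∀ j, Monotone (fun i => b i j)) →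
      (∀ (i : Fin (r + 1)) (j : Fin (s + 2)),
        b i.castSucc j ∈ Jp → b i.succ j ∈ Jp → b i.castSucc j < b i.succ j) →
      (∀ (i : Fin (r + 2)) (j : Fin (s + 1)),
        b i j.castSucc ∈ Jm → b i j.succ ∈ Jm → b i j.castSucc < b i j.succ) →
      False := by
  intro n
  induction n using Nat.strong_induction_on with
  | _ n ih =>
  intro r s hn Jp Jm hdisj hcp hcm b hmem hrow hcol hvert hhor
  have hUne : (Jp ∪ Jm).Nonempty := by
    apply Finset.Nonempty.mono Finset.subset_union_left
    exact Finset.card_pos.mp (by omega)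
  set m0 := (Jp ∪ Jm).min' hUne with hm0def
  have hmin : ∀ x, (x ∈ Jp ∨ x ∈ Jm) → m0 ≤ x :=
    fun x hx => Finset.min'_le _ _ (Finset.mem_union.mpr hx)
  have hm0U : m0 ∈ Jp ∪ Jm := Finset.min'_mem _ _
  rcases Finset.mem_union.mp hm0U with hP | hM
  · -- minimal element in Jp: it can only occur in row 0
    have hno : ∀ (i : Fin (r + 1)) (j : Fin (s + 2)), b i.succ j ≠ m0 := by
      intro i j h
      have h1 : b i.castSucc j ≤ b i.succ j := hcol j (Fin.castSucc_lt_succ (i := i)).le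
      have h2 : b i.castSucc j = m0 :=
        le_antisymm (h ▸ h1) (hmin _ (hmem _ _))
      have := hvert i j (h2 ▸ hP) (h ▸ hP)
      rw [h2, h] at this
      exact lt_irrefl _ this
    cases r with
    | zero =>
      have hallm : ∀ j, b 1 j ∈ Jm := by
        intro j
        have hne : b 1 j ≠ m0 := hno 0 j
        rcases hmem 1 j with h | h
        · obtain ⟨a, ha⟩ := Finset.card_eq_one.mp hcp
          rw [ha, Finset.mem_singleton] at h hP
          exact absurd (h.trans hP.symm) hne
        · exact h
      exact strict_line s Jm hcm (b 1) hallm (fun j => hhor 1 j (hallm _) (hallm _))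
    | succ r' =>
      refine ih (r' + s) (by omega) r' s rfl (Jp.erase m0) Jm
        (hdisj.mono_left (Finset.erase_subset _ _))
        (by rw [Finset.card_erase_of_mem hP, hcp]; omega)
        hcm (fun i j => b i.succ j) ?_ ?_ ?_ ?_ ?_
      · intro i j
        rcases hmem i.succ j with h | h
        · exact Or.inl (Finset.mem_erase.mpr ⟨hno i j, h⟩)
        · exact Or.inr h
      · intro i; exact hrow i.succ
      · intro j a c h
        exact hcol j (Fin.succ_le_succ_iff.mpr h)
      · intro i j h1 h2
        have h1' := Finset.mem_of_mem_erase h1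
        have h2' := Finset.mem_of_mem_erase h2
        have := hvert i.succ j
        rw [← Fin.succ_castSucc] at this
        exact this h1' h2'
      · intro i j h1 h2
        exact hhor i.succ j h1 h2
  · -- minimal element in Jm: it can only occur in column 0
    have hno : ∀ (i : Fin (r + 2)) (j : Fin (s + 1)), b i j.succ ≠ m0 := by
      intro i j h
      have h1 : b i j.castSucc ≤ b i j.succ := hrow i (Fin.castSucc_lt_succ (i := j)).le
      have h2 : b i j.castSucc = m0 :=
        le_antisymm (h ▸ h1) (hmin _ (hmem _ _))
      have := hhor i j (h2 ▸ hM) (h ▸ hM)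
      rw [h2, h] at this
      exact lt_irrefl _ this
    cases s with
    | zero =>
      have hallp : ∀ i, b i 1 ∈ Jp := by
        intro i
        have hne : b i 1 ≠ m0 := hno i 0
        rcases hmem i 1 with h | h
        · exact h
        · obtain ⟨a, ha⟩ := Finset.card_eq_one.mp hcm
          rw [ha, Finset.mem_singleton] at h hM
          exact absurd (h.trans hM.symm) hne
      exact strict_line r Jp hcp (fun i => b i 1) hallp
        (fun i => hvert i 1 (hallp _) (hallp _))
    | succ s' =>
      refine ih (r + s') (by omega) r s' rfl Jp (Jm.erase m0) 
        (hdisj.mono_right (Finset.erase_subset _ _))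
        hcp
        (by rw [Finset.card_erase_of_mem hM, hcm]; omega)
        (fun i j => b i j.succ) ?_ ?_ ?_ ?_ ?_
      · intro i j
        rcases hmem i j.succ with h | h
        · exact Or.inl h
        · exact Or.inr (Finset.mem_erase.mpr ⟨hno i j, h⟩)
      · intro i a c h
        exact hrow i (Fin.succ_le_succ_iff.mpr h)
      · intro j; exact hcol j.succ
      · intro i j h1 h2
        exact hvert i j.succ h1 h2
      · intro i j h1 h2
        have h1' := Finset.mem_of_mem_erase h1
        have h2' := Finset.mem_of_mem_erase h2
        have := hhor i j.succ
        rw [← Fin.succ_castSucc] at this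
        exact this h1' h2'

theorem stmt7 (r s : ℕ)
    (Jp Jm : Finset (Fin (r + s + 2)))
    (hdisj : Disjoint Jp Jm)
    (hunion : Jp ∪ Jm = Finset.univ)
    (hcp : Jp.card = r + 1) (hcm : Jm.card = s + 1) :
    ¬ ∃ b : Fin (r + 2) → Fin (s + 2) → Fin (r + s + 2),
      (∀ i : Fin (r + 2), Monotone (b i)) ∧
      (∀ j : Fin (s + 2), Monotone (fun i => b i j)) ∧
      (∀ (i : Fin (r + 1)) (j : Fin (s + 2)),
        b i.castSucc j ∈ Jp → b i.succ j ∈ Jp → b i.castSucc j < b i.succ j) ∧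
      (∀ (i : Fin (r + 2)) (j : Fin (s + 1)),
        b i j.castSucc ∈ Jm → b i j.succ ∈ Jm → b i j.castSucc < b i j.succ) := by
  rintro ⟨b, hrow, hcol, hvert, hhor⟩
  exact aux_tab (r + s) r s rfl Jp Jm hdisj hcp hcm b
    (fun i j => by
      have h := Finset.mem_univ (b i j)
      rw [← hunion] at h
      exact Finset.mem_union.mp h)
    hrow hcol hvert hhor
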